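/- X has no proper infinite subsystem: every infinite closed shift-invariant subset Y ⊆ X equals X. -/

import Mathlib

/-- The shift map σ on the full shift `{0,1}^ℤ`, `σ(x)_i = x_{i+1}`. -/
def shift (x : ℤ → Bool) : ℤ → Bool := fun i => x (i + 1)

/-- The iterate `σ^k` of the shift, for `k ∈ ℤ`. -/
def shiftZ (k : ℤ) (x : ℤ → Bool) : ℤ → Bool := fun i => x (i + k)

/-- `wlist n` is the list `[w_0, w_1, …, w_{2n+1}]` of the words of the construction:
`w_0 = 0`, `w_1 = 1`, and for `n ≥ 1`, `a ∈ {0,1}`,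
`w_{2n+a} = w_{2n-2} w_a w_{2n-2} ∏_{k=0}^{2n-1} (w_k^n w_{2n-2})`. -/
def wlist : ℕ → List (List Bool)
  | 0 => [[false], [true]]
  | n + 1 =>
    let prev := wlist n
    let w : ℕ → List Bool := fun k => prev.getD k []
    let base := w (2 * n)
    let tail := (List.range (2 * n + 2)).flatMap
      (fun k => (List.replicate (n + 1) (w k)).flatten ++ base)
    prev ++ [base ++ w 0 ++ base ++ tail, base ++ w 1 ++ base ++ tail]

/-- The word `w_n`. -/
def wrd (n : ℕ) : List Bool := (wlist n).getD n []

/-- The periodic point `u^ℤ` associated to a nonempty word `u`;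
it satisfies `(u^ℤ)_{m|u|+i} = u_i` for all `m ∈ ℤ`, `0 ≤ i < |u|`. -/
def perPt (u : List Bool) : ℤ → Bool := fun i => u.getD ((i % (u.length : ℤ)).toNat) false

/-- The union of the shift orbits of the points `w_n^ℤ`. -/
def Xgen : Set (ℤ → Bool) := {x | ∃ (n : ℕ) (k : ℤ), x = shiftZ k (perPt (wrd n))}

/-- The subshift `X`: the smallest subshift containing the points `w_n^ℤ`,
i.e. the closure of the union of their shift orbits. -/
def XX : Set (ℤ → Bool) := closure Xgen

/-- The word `u` occurs as a (contiguous) subword of the point `x`. -/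
def occursIn (u : List Bool) (x : ℤ → Bool) : Prop :=
  ∃ i : ℤ, ∀ j : ℕ, j < u.length → x (i + (j : ℤ)) = u.getD j false


namespace S11
open List

abbrev len (n : ℕ) : ℕ := (wrd n).length
def pw (u : List Bool) (q : ℕ) : List Bool := (List.replicate q u).flatten
def tailW (n : ℕ) : List Bool :=
  (List.range (2*n+2)).flatMap (fun k => pw (wrd k) (n+1) ++ wrd (2*n))

lemma wlist_succ (n : ℕ) : wlist (n+1) = wlist n ++
    [(wlist n).getD (2*n) [] ++ (wlist n).getD 0 [] ++ (wlist n).getD (2*n) [] ++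
      (List.range (2*n+2)).flatMap (fun k => (List.replicate (n+1) ((wlist n).getD k [])).flatten ++ (wlist n).getD (2*n) []),
     (wlist n).getD (2*n) [] ++ (wlist n).getD 1 [] ++ (wlist n).getD (2*n) [] ++
      (List.range (2*n+2)).flatMap (fun k => (List.replicate (n+1) ((wlist n).getD k [])).flatten ++ (wlist n).getD (2*n) [])] := rfl

lemma wlist_len (n : ℕ) : (wlist n).length = 2*n+2 := by
  induction n with
  | zero => rfl
  | succ n ih => rw [wlist_succ, List.length_append, ih]; simp; omega

lemma wlist_prefix {n m : ℕ} (h : n ≤ m) : wlist n <+: wlist m := by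
  induction m with
  | zero => simp_all
  | succ m ih =>
    rcases Nat.lt_or_ge n (m+1) with h'|h'
    · exact (ih (by omega)).trans (by rw [wlist_succ]; exact List.prefix_append _ _)
    · have : n = m+1 := by omega
      subst this; exact List.prefix_rfl

lemma wlist_getD_stable {n m k : ℕ} (h : n ≤ m) (hk : k < 2*n+2) :
    (wlist m).getD k [] = (wlist n).getD k [] := by
  obtain ⟨t, ht⟩ := wlist_prefix h
  rw [← ht, List.getD_append]
  rw [wlist_len]; omega

lemma wlist_getD_wrd {n k : ℕ} (hk : k < 2*n+2) : (wlist n).getD k [] = wrd k := by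
  rw [wrd]
  rcases Nat.le_total n k with h|h
  · exact (wlist_getD_stable h (by omega)).symm
  · exact wlist_getD_stable h (by omega)

lemma wrd_rec (n : ℕ) (a : ℕ) (ha : a ≤ 1) :
    wrd (2*n+2+a) = wrd (2*n) ++ wrd a ++ wrd (2*n) ++ tailW n := by
  have hlen := wlist_len n
  have h2n : (wlist n).getD (2*n) [] = wrd (2*n) := wlist_getD_wrd (by omega)
  have ha' : (wlist n).getD a [] = wrd a := wlist_getD_wrd (by omega)
  have htail : (List.range (2*n+2)).flatMap
      (fun k => (List.replicate (n+1) ((wlist n).getD k [])).flatten ++ (wlist n).getD (2*n) [])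
      = tailW n := by
    rw [tailW, List.flatMap, List.flatMap]
    congr 1
    apply List.map_congr_left
    intro k hk
    rw [List.mem_range] at hk
    rw [wlist_getD_wrd hk, h2n, pw]
  have h1 : wrd (2*n+2+a) = (wlist (n+1)).getD (2*n+2+a) [] := by
    rw [wrd]
    exact wlist_getD_stable (by omega) (by omega)
  rw [h1, wlist_succ, List.getD_append_right _ _ _ _ (by omega), hlen]
  have h2 : 2*n+2+a - (2*n+2) = a := by omega
  rw [h2]
  interval_cases a
  · simp only [List.getD_cons_zero]; rw [htail, h2n, ha']
  · simp only [List.getD_cons_succ, List.getD_cons_zero]; rw [htail, h2n, ha']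

lemma wrd_zero : wrd 0 = [false] := rfl
lemma wrd_one : wrd 1 = [true] := rfl

lemma pw_zero (u : List Bool) : pw u 0 = [] := rfl
lemma pw_succ (u : List Bool) (q : ℕ) : pw u (q+1) = u ++ pw u q := by
  simp [pw, List.replicate_succ]
lemma pw_one (u : List Bool) : pw u 1 = u := by simp [pw]
lemma pw_len (u : List Bool) (q : ℕ) : (pw u q).length = q * u.length := by
  induction q with
  | zero => simp [pw]
  | succ q ih => rw [pw_succ, List.length_append, ih]; ring
lemma pw_add (u : List Bool) (q q' : ℕ) : pw u (q+q') = pw u q ++ pw u q' := by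
  induction q with
  | zero => simp [pw_zero]
  | succ q ih => rw [Nat.succ_add, pw_succ, pw_succ, ih, List.append_assoc]
lemma pw_prefix_pw (u : List Bool) {q q' : ℕ} (h : q ≤ q') : pw u q <+: pw u q' := by
  obtain ⟨t, rfl⟩ := Nat.le.dest h
  rw [pw_add]; exact List.prefix_append _ _

lemma exists_rep {N : ℕ} (h : 2 ≤ N) : ∃ n a, a ≤ 1 ∧ N = 2*n+2+a :=
  ⟨(N-2)/2, (N-2)%2, by omega, by omega⟩

lemma piece_infix_tail {n k : ℕ} (hk : k < 2*n+2) :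
    pw (wrd k) (n+1) ++ wrd (2*n) <:+: tailW n := by
  rw [tailW, List.flatMap]
  exact List.infix_of_mem_flatten (List.mem_map.2 ⟨k, List.mem_range.2 hk, rfl⟩)

lemma tail_infix (n a : ℕ) (ha : a ≤ 1) : tailW n <:+ wrd (2*n+2+a) := by
  rw [wrd_rec n a ha]; exact List.suffix_append _ _

lemma pow_infix_wrd {n a k p : ℕ} (ha : a ≤ 1) (hk : k ≤ 2*n+1) (hp : p ≤ n+1) :
    pw (wrd k) p <:+: wrd (2*n+2+a) := by
  have h1 : pw (wrd k) p <+: pw (wrd k) (n+1) := pw_prefix_pw _ hp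
  have h2 : pw (wrd k) (n+1) <:+: tailW n :=
    (List.prefix_append _ (wrd (2*n))).isInfix.trans (piece_infix_tail (by omega))
  exact (h1.isInfix.trans h2).trans (tail_infix n a ha).isInfix

lemma crit {k p N : ℕ} (h : 2 * max k p + 3 ≤ N) : pw (wrd k) p <:+: wrd N := by
  obtain ⟨n, a, ha, rfl⟩ := exists_rep (N := N) (by omega)
  have hm := Nat.le_max_left k p
  have hm' := Nat.le_max_right k p
  refine pow_infix_wrd ha ?_ ?_ <;> omega

lemma wrd_infix_wrd {k n a : ℕ} (ha : a ≤ 1) (hk : k ≤ 2*n+1) :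
    wrd k <:+: wrd (2*n+2+a) := by
  have := pow_infix_wrd (p := 1) ha hk (by omega)
  rwa [pw_one] at this

lemma base_prefix (n a : ℕ) (ha : a ≤ 1) : wrd (2*n) <+: wrd (2*n+2+a) := by
  rw [wrd_rec n a ha, List.append_assoc, List.append_assoc]
  exact List.prefix_append _ _

lemma base_suffix (n a : ℕ) (ha : a ≤ 1) : wrd (2*n) <:+ wrd (2*n+2+a) := by
  have : wrd (2*n) <:+ tailW n := by
    rw [tailW, List.range_succ, List.flatMap_append]
    simp only [List.flatMap_cons, List.flatMap_nil, List.append_nil]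
    rw [← List.append_assoc]
    exact List.suffix_append _ _
  exact this.trans (tail_infix n a ha)

lemma prefix_even {m n : ℕ} (h : m ≤ n) : wrd (2*m) <+: wrd (2*n) := by
  induction n with
  | zero => have : m = 0 := by omega
            subst this; exact List.prefix_rfl
  | succ n ih =>
    rcases Nat.lt_or_ge m (n+1) with h'|h'
    · have : 2*(n+1) = 2*n+2+0 := by ring
      rw [this]
      exact (ih (by omega)).trans (base_prefix n 0 (by omega))
    · have : m = n+1 := by omega
      subst this; exact List.prefix_rfl

lemma suffix_even {m n : ℕ} (h : m ≤ n) : wrd (2*m) <:+ wrd (2*n) := by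
  induction n with
  | zero => have : m = 0 := by omega
            subst this; exact List.suffix_rfl
  | succ n ih =>
    rcases Nat.lt_or_ge m (n+1) with h'|h'
    · have : 2*(n+1) = 2*n+2+0 := by ring
      rw [this]
      exact (ih (by omega)).trans (base_suffix n 0 (by omega))
    · have : m = n+1 := by omega
      subst this; exact List.suffix_rfl

lemma len_pos (n : ℕ) : 0 < len n := by
  induction n using Nat.strong_induction_on with
  | _ n ih =>
    match n, ih with
    | 0, _ => simp [len, wrd_zero]
    | 1, _ => simp [len, wrd_one]
    | (n+2), ih =>
      obtain ⟨m, a, ha, hrep⟩ := exists_rep (N := n+2) (by omega)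
      have h0 : 0 < len (2*m) := ih (2*m) (by omega)
      rw [len, hrep, wrd_rec m a ha]
      simp only [List.length_append, len] at h0 ⊢
      omega

lemma len_mono : Monotone len := by
  have key : ∀ n, len n ≤ len (n+1) := by
    intro n
    match n with
    | 0 => simp [len, wrd_zero, wrd_one]
    | (n+1) =>
      obtain ⟨m, a, ha, hrep⟩ := exists_rep (N := n+2) (by omega)
      rcases Nat.lt_or_ge a 1 with h0|h1
      · -- n+2 = 2m+2, n+1 = 2m+1 ≤ 2m+1: wrd (n+1) infix of wrd (n+2)
        have ha0 : a = 0 := by omega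
        subst ha0
        have : wrd (n+1) <:+: wrd (2*m+2+0) := wrd_infix_wrd (by omega) (by omega)
        rw [← hrep] at this
        exact this.length_le
      · -- a = 1 : n+2 = 2m+3, n+1 = 2m+2 : equal lengths
        have ha1 : a = 1 := by omega
        subst ha1
        have h1 : (n+1) = 2*m+2+0 := by omega
        have e1 : len (n+1) = len (2*m) + len 0 + len (2*m) + (tailW m).length := by
          rw [len, h1, wrd_rec m 0 (by omega)]
          simp only [List.length_append, len]
        have e2 : len (n+2) = len (2*m) + len 1 + len (2*m) + (tailW m).length := by
          rw [len, hrep, wrd_rec m 1 (by omega)]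
          simp only [List.length_append, len]
        rw [e1, e2]
        simp [len, wrd_zero, wrd_one]
  exact monotone_nat_of_le_succ key

end S11

namespace S11
open List

lemma prefix_shorter {α : Type*} {y A B : List α} (h : y <+: A ++ B)
    (hl : y.length ≤ A.length) : y <+: A :=
  List.prefix_of_prefix_length_le h (List.prefix_append _ _) hl

lemma prefix_longer {α : Type*} {y A B : List α} (h : y <+: A ++ B)
    (hl : A.length ≤ y.length) : ∃ z, y = A ++ z ∧ z <+: B := by
  have hA : A <+: y := List.prefix_of_prefix_length_le (List.prefix_append _ _) h hl
  obtain ⟨z, rfl⟩ := hA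
  refine ⟨z, rfl, ?_⟩
  obtain ⟨t, ht⟩ := h
  rw [List.append_assoc] at ht
  exact ⟨t, (List.append_cancel_left ht)⟩

lemma suffix_shorter {α : Type*} {x A B : List α} (h : x <:+ A ++ B)
    (hl : x.length ≤ B.length) : x <:+ B := by
  have := List.suffix_of_suffix_length_le h (List.suffix_append _ _) hl
  exact this

lemma suffix_longer {α : Type*} {x A B : List α} (h : x <:+ A ++ B)
    (hl : B.length ≤ x.length) : ∃ z, x = z ++ B ∧ z <:+ A := by
  have hB : B <:+ x := List.suffix_of_suffix_length_le (List.suffix_append _ _) h hl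
  obtain ⟨z, rfl⟩ := hB
  refine ⟨z, rfl, ?_⟩
  obtain ⟨t, ht⟩ := h
  rw [← List.append_assoc] at ht
  exact ⟨t, (List.append_cancel_right ht)⟩

lemma infix_of_suffix_prefix {α : Type*} {x y A B : List α} (hx : x <:+ A) (hy : y <+: B) :
    x ++ y <:+: A ++ B := by
  obtain ⟨s, rfl⟩ := hx
  obtain ⟨t, rfl⟩ := hy
  exact ⟨s, t, by simp⟩

lemma infix_append_cases {α : Type*} {u A B : List α} (h : u <:+: A ++ B) :
    u <:+: A ∨ u <:+: B ∨ ∃ x y, u = x ++ y ∧ x <:+ A ∧ y <+: B ∧ x ≠ [] ∧ y ≠ [] := by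
  obtain ⟨s, t, hst⟩ := h
  rw [List.append_assoc] at hst
  rcases List.append_eq_append_iff.1 hst with ⟨a', hA, hut⟩ | ⟨c', hs, hB⟩
  · rcases List.append_eq_append_iff.1 hut with ⟨x, ha', ht⟩ | ⟨y, hu, hBy⟩
    · left; exact ⟨s, x, by rw [hA, ha']; simp⟩
    · by_cases hy : y = []
      · subst hy; rw [List.append_nil] at hu
        left; exact ⟨s, [], by rw [hA, ← hu]; simp⟩
      · by_cases ha0 : a' = []
        · subst ha0; rw [List.nil_append] at hu
          right; left; subst hu; exact ⟨[], t, by simpa using hBy.symm⟩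
        · right; right; exact ⟨a', y, hu, ⟨s, hA.symm⟩, ⟨t, hBy.symm⟩, ha0, hy⟩
  · right; left; exact ⟨c', t, by rw [hB]; simp⟩

/-- `F S R = S ++ r₁ ++ S ++ r₂ ++ S ++ ⋯ `. -/
def F (S : List Bool) (R : List (List Bool)) : List Bool := S ++ R.flatMap (fun r => r ++ S)

lemma F_nil (S : List Bool) : F S [] = S := by simp [F]

lemma F_cons (S r : List Bool) (R : List (List Bool)) :
    F S (r :: R) = S ++ r ++ F S R := by simp [F]

lemma F_append (S : List Bool) (R R' : List (List Bool)) :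
    F S (R ++ [[]] ++ R') = F S R ++ F S R' := by
  simp [F]

lemma covering {S u : List Bool} {R : List (List Bool)} (h : u <:+: F S R) :
    (S <:+: u) ∨ (u <:+: S) ∨ ∃ r ∈ R, u <:+: S ++ r ++ S := by
  induction R generalizing u with
  | nil => rw [F_nil] at h; exact Or.inr (Or.inl h)
  | cons r R ih =>
    rw [F_cons, List.append_assoc] at h
    rcases infix_append_cases h with h1 | h1 | ⟨x, y, rfl, hx, hy, hx0, hy0⟩
    · exact Or.inr (Or.inl h1)
    · rcases infix_append_cases h1 with h2 | h2 | ⟨x, y, rfl, hx, hy, hx0, hy0⟩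
      · exact Or.inr (Or.inr ⟨r, List.mem_cons_self, h2.trans ⟨S, S, by simp⟩⟩)
      · rcases ih h2 with h3 | h3 | ⟨r', hr', h3⟩
        · exact Or.inl h3
        · exact Or.inr (Or.inl h3)
        · exact Or.inr (Or.inr ⟨r', List.mem_cons_of_mem _ hr', h3⟩)
      · -- u = x ++ y, x <:+ r, y <+: F S R = S ++ _
        rcases Nat.le_total y.length S.length with hle | hle
        · have hyS : y <+: S := prefix_shorter (by rwa [F] at hy) hle
          refine Or.inr (Or.inr ⟨r, List.mem_cons_self, ?_⟩)
          rw [List.append_assoc]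
          exact (infix_of_suffix_prefix hx hyS).trans
            ((List.suffix_append _ _).isInfix.trans (List.infix_refl _))
        · have hSy : S <+: y := List.prefix_of_prefix_length_le
            (show S <+: F S R by rw [F]; exact List.prefix_append _ _) hy hle
          left
          obtain ⟨w, rfl⟩ := hSy
          exact ⟨x, w, by simp⟩
    · -- u = x ++ y, x <:+ S, y <+: r ++ F S R
      rcases Nat.le_total y.length r.length with hle | hle
      · have hyr : y <+: r := prefix_shorter hy hle
        refine Or.inr (Or.inr ⟨r, List.mem_cons_self, ?_⟩)
        exact (infix_of_suffix_prefix hx hyr).trans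
          ((List.prefix_append _ _).isInfix.trans (List.infix_refl _))
      · obtain ⟨z, rfl, hz⟩ := prefix_longer hy hle
        rcases Nat.le_total z.length S.length with hle2 | hle2
        · have hzS : z <+: S := prefix_shorter (by rwa [F] at hz) hle2
          refine Or.inr (Or.inr ⟨r, List.mem_cons_self, ?_⟩)
          rw [← List.append_assoc]
          exact infix_of_suffix_prefix (by
            obtain ⟨s, rfl⟩ := hx
            exact ⟨s, by rw [List.append_assoc]⟩) hzS
        · have hSz : S <+: z := by
            rw [F] at hz
            exact List.prefix_of_prefix_length_le (List.prefix_append _ _) hz hle2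
          left
          obtain ⟨w, rfl⟩ := hSz
          exact ⟨x ++ r, w, by simp⟩

end S11

namespace S11
open List

lemma wrd_ne_nil (n : ℕ) : wrd n ≠ [] :=
  List.ne_nil_of_length_pos (len_pos n)

lemma pw_succ' (u : List Bool) (q : ℕ) : pw u (q+1) = pw u q ++ u := by
  rw [pw_add u q 1, pw_one]

lemma len_pair (m : ℕ) : len (2*m+2) = len (2*m+3) := by
  have h3 : (2*m+3) = 2*m+2+1 := by omega
  rw [len, len, h3, wrd_rec m 0 (by omega), wrd_rec m 1 (by omega)]
  simp [wrd_zero, wrd_one]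

lemma prefix_pw_ge {v y : List Bool} {q : ℕ} (h : y <+: pw v q)
    (hl : v.length ≤ y.length) (hv : v ≠ []) : v <+: y := by
  match q with
  | 0 =>
    exfalso
    rw [pw_zero] at h
    rw [List.prefix_nil.1 h] at hl
    have h2 := List.length_pos_iff.2 hv
    have h3 : v.length ≤ 0 := by simpa using hl
    omega
  | q+1 =>
    rw [pw_succ] at h
    exact List.prefix_of_prefix_length_le (List.prefix_append _ _) h hl

lemma suffix_pw_ge {v y : List Bool} {q : ℕ} (h : y <:+ pw v q)
    (hl : v.length ≤ y.length) (hv : v ≠ []) : v <:+ y := by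
  match q with
  | 0 =>
    exfalso
    rw [pw_zero] at h
    rw [List.suffix_nil.1 h] at hl
    have h2 := List.length_pos_iff.2 hv
    have h3 : v.length ≤ 0 := by simpa using hl
    omega
  | q+1 =>
    rw [pw_succ'] at h
    exact List.suffix_of_suffix_length_le (List.suffix_append _ _) h hl

lemma prefix_pw_small {v y : List Bool} {q : ℕ} (h : y <+: pw v q)
    (hl : y.length ≤ v.length) : y <+: v := by
  match q with
  | 0 =>
    rw [pw_zero] at h
    rw [List.prefix_nil.1 h]
    exact List.nil_prefix
  | q+1 =>
    rw [pw_succ] at h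
    exact prefix_shorter h hl

lemma suffix_pw_small {v y : List Bool} {q : ℕ} (h : y <:+ pw v q)
    (hl : y.length ≤ v.length) : y <:+ v := by
  match q with
  | 0 =>
    rw [pw_zero] at h
    rw [List.suffix_nil.1 h]
    exact List.nil_suffix
  | q+1 =>
    rw [pw_succ'] at h
    exact suffix_shorter h hl

lemma infix_pw_long {v u : List Bool} {q : ℕ} (h : u <:+: pw v q)
    (hl : 2 * v.length ≤ u.length) (hv : v ≠ []) : v <:+: u := by
  have hvp := List.length_pos_iff.2 hv
  induction q with
  | zero =>
    exfalso
    rw [pw_zero] at h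
    rw [List.infix_nil.1 h] at hl
    have h3 : 2*v.length ≤ 0 := by simpa using hl
    omega
  | succ q ih =>
    rw [pw_succ] at h
    rcases infix_append_cases h with h1 | h1 | ⟨x, y, rfl, hx, hy, hx0, hy0⟩
    · exfalso; have := h1.length_le; omega
    · exact ih h1
    · have hxl := hx.length_le
      have hyl : v.length ≤ y.length := by
        rw [List.length_append] at hl; omega
      have hvy : v <+: y := prefix_pw_ge hy hyl hv
      obtain ⟨w, rfl⟩ := hvy
      exact ⟨x, w, by simp⟩

/-! ### structural decomposition of `wrd` powers -/

def runs (n a : ℕ) : List (List Bool) :=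
  wrd a :: (List.range (2*n+2)).map (fun k => pw (wrd k) (n+1))

lemma wrd_eq_F (n a : ℕ) (ha : a ≤ 1) : wrd (2*n+2+a) = F (wrd (2*n)) (runs n a) := by
  rw [wrd_rec n a ha, F, runs, List.flatMap_cons, List.flatMap_map, tailW]
  simp [List.append_assoc]

def Rq (R : List (List Bool)) : ℕ → List (List Bool)
  | 0 => R
  | q+1 => Rq R q ++ [[]] ++ R

lemma mem_Rq {R : List (List Bool)} {q : ℕ} {r : List Bool} (h : r ∈ Rq R q) :
    r = [] ∨ r ∈ R := by
  induction q with
  | zero => exact Or.inr h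
  | succ q ih =>
    simp only [Rq, List.mem_append, List.mem_singleton] at h
    rcases h with (h | h) | h
    · exact ih h
    · exact Or.inl h
    · exact Or.inr h

lemma pw_eq_F (S : List Bool) (R : List (List Bool)) (q : ℕ) :
    pw (F S R) (q+1) = F S (Rq R q) := by
  induction q with
  | zero => rw [pw_one]; rfl
  | succ q ih =>
    rw [pw_succ', ih, Rq, F_append]

lemma mem_runs {n a : ℕ} {r : List Bool} (ha : a ≤ 1) (h : r ∈ runs n a) :
    ∃ j e, r = pw (wrd j) e ∧ j ≤ 2*n+1 ∧ (1 ≤ e ∨ j = 0) := by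
  rw [runs, List.mem_cons] at h
  rcases h with h | h
  · exact ⟨a, 1, by rw [h, pw_one], by omega, Or.inl le_rfl⟩
  · obtain ⟨j, hj, rfl⟩ := List.mem_map.1 h
    exact ⟨j, n+1, rfl, by simp at hj; omega, Or.inl (by omega)⟩

/-! ### long prefixes / suffixes of `wrd N` contain all powers -/

lemma pre_lemma {k p : ℕ} : ∀ N : ℕ, ∀ v : List Bool, v <+: wrd N →
    len (2*(max k p)+4) < v.length → pw (wrd k) p <:+: v := by
  intro N
  induction N using Nat.strong_induction_on with
  | _ N ih =>
    intro v hv hl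
    rcases le_or_gt N (2*(max k p)+5) with hN | hN
    · exfalso
      have h1 : v.length ≤ len N := hv.length_le
      have h2 : len N ≤ len (2*(max k p)+5) := len_mono hN
      have h3 : len (2*(max k p)+4) = len (2*(max k p)+5) := by
        have e1 : 2*(max k p)+4 = 2*(max k p + 1)+2 := by ring
        have e2 : 2*(max k p)+5 = 2*(max k p + 1)+3 := by ring
        rw [e1, e2]; exact len_pair _
      omega
    · obtain ⟨n, a, ha, hrep⟩ := exists_rep (N := N) (by omega)
      have h2n : 2*(max k p)+3 ≤ 2*n := by omega
      rw [hrep, wrd_rec n a ha, List.append_assoc, List.append_assoc] at hv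
      rcases le_or_gt v.length (len (2*n)) with hle | hgt
      · exact ih (2*n) (by omega) v (prefix_shorter hv hle) hl
      · obtain ⟨z, hz, _⟩ := prefix_longer hv (le_of_lt hgt)
        exact (crit h2n).trans ⟨[], z, by rw [hz]; simp⟩

lemma suf_lemma {k p : ℕ} : ∀ N : ℕ, ∀ v : List Bool, v <:+ wrd N →
    len (2*(max k p)+4) < v.length → pw (wrd k) p <:+: v := by
  intro N
  induction N using Nat.strong_induction_on with
  | _ N ih =>
    intro v hv hl
    rcases le_or_gt N (2*(max k p)+5) with hN | hN
    · exfalso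
      have h1 : v.length ≤ len N := hv.length_le
      have h2 : len N ≤ len (2*(max k p)+5) := len_mono hN
      have h3 : len (2*(max k p)+4) = len (2*(max k p)+5) := by
        have e1 : 2*(max k p)+4 = 2*(max k p + 1)+2 := by ring
        have e2 : 2*(max k p)+5 = 2*(max k p + 1)+3 := by ring
        rw [e1, e2]; exact len_pair _
      omega
    · obtain ⟨n, a, ha, hrep⟩ := exists_rep (N := N) (by omega)
      have h2n : 2*(max k p)+3 ≤ 2*n := by omega
      obtain ⟨front, hfront⟩ := base_suffix n a ha
      rw [hrep, ← hfront] at hv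
      rcases le_or_gt v.length (len (2*n)) with hle | hgt
      · exact ih (2*n) (by omega) v (suffix_shorter hv hle) hl
      · obtain ⟨z, hz, _⟩ := suffix_longer hv (le_of_lt hgt)
        exact (crit h2n).trans ⟨z, [], by rw [hz]; simp⟩

end S11

namespace S11
open List

def KK (k p : ℕ) : ℕ := 2*max k p + 2
def CC (k p : ℕ) : ℕ := len (2*max k p + 4)
def MM (k p : ℕ) : ℕ := 4 * CC k p + 2

lemma CC_pos (k p : ℕ) : 0 < CC k p := len_pos _

lemma crit_KK {k p j : ℕ} (h : KK k p < j) : pw (wrd k) p <:+: wrd j :=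
  crit (by unfold KK at h; omega)

/-- The main combinatorial dichotomy: every sufficiently long window of any
power `wₙ^q` either contains `w_k^p`, or coincides—except for margins of
bounded size—with a window of some `w_j^q'` with `j` bounded. -/
theorem lemA (k p : ℕ) : ∀ N : ℕ, ∀ (q : ℕ) (u : List Bool), u <:+: pw (wrd N) q →
    MM k p ≤ u.length →
    pw (wrd k) p <:+: u ∨
    ∃ s mid pr j q', u = s ++ mid ++ pr ∧ s.length ≤ CC k p ∧ pr.length ≤ CC k p ∧
      j ≤ KK k p ∧ mid <:+: pw (wrd j) q' := by
  intro N
  induction N using Nat.strong_induction_on with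
  | _ N ih =>
    intro q u hu hlen
    by_cases hNK : N ≤ KK k p
    · exact Or.inr ⟨[], u, [], N, q, by simp, by simp, by simp, hNK, hu⟩
    push_neg at hNK
    by_cases hN3 : N ≤ KK k p + 3
    · -- `wrd N` itself occurs in `u`
      left
      have hNcrit : 2*max k p + 3 ≤ N := by unfold KK at hNK; omega
      have hlenN : len N ≤ CC k p := by
        have h1 : len N ≤ len (KK k p + 3) := len_mono hN3
        have h2 : KK k p + 3 = 2*(max k p + 1) + 3 := by unfold KK; ring
        have h3 : CC k p = len (2*(max k p + 1) + 2) := by unfold CC; congr 1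
        rw [h2] at h1; rw [h3, len_pair]
        exact h1
      have h2 : 2 * len N ≤ u.length := by unfold MM at hlen; omega
      exact (crit hNcrit).trans (infix_pw_long hu h2 (wrd_ne_nil N))
    · -- N ≥ KK + 4
      push_neg at hN3
      obtain ⟨n, a, ha, hrep⟩ := exists_rep (N := N) (by unfold KK at hN3; omega)
      have h2n : 2*max k p + 4 ≤ 2*n := by unfold KK at hN3; omega
      have h2ncrit : KK k p < 2*n := by unfold KK; omega
      match q with
      | 0 =>
        exfalso
        rw [pw_zero] at hu
        rw [List.infix_nil.1 hu] at hlen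
        have := CC_pos k p
        unfold MM at hlen
        simp at hlen
      | q+1 =>
        rw [hrep, wrd_eq_F n a ha, pw_eq_F] at hu
        have SEG : ∀ j e, j ≤ 2*n+1 → (1 ≤ e ∨ j = 0) →
            u <:+: wrd (2*n) ++ pw (wrd j) e ++ wrd (2*n) →
            pw (wrd k) p <:+: u ∨
            ∃ s mid pr j q', u = s ++ mid ++ pr ∧ s.length ≤ CC k p ∧ pr.length ≤ CC k p ∧
              j ≤ KK k p ∧ mid <:+: pw (wrd j) q' := by
          intro j e hj hje hSr
          have hjN : j < N := by omega
          have h2nN : 2*n < N := by omega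
          rw [List.append_assoc] at hSr
          rcases infix_append_cases hSr with hA | hA | ⟨x, y, hxy, hx, hy, hx0, hy0⟩
          · exact ih (2*n) h2nN 1 u (by rwa [pw_one]) hlen
          · rcases infix_append_cases hA with hB | hB | ⟨x, y, hxy, hx, hy, hx0, hy0⟩
            · by_cases hjK : j ≤ KK k p
              · exact Or.inr ⟨[], u, [], j, e, by simp, by simp, by simp, hjK, hB⟩
              · exact ih j hjN e u hB hlen
            · exact ih (2*n) h2nN 1 u (by rwa [pw_one]) hlen
            · -- u = x ++ y, x <:+ pw (wrd j) e, y <+: wrd (2*n)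
              subst hxy
              by_cases hyC : CC k p < y.length
              · left
                exact (pre_lemma (2*n) y hy hyC).trans (List.suffix_append x y).isInfix
              · push_neg at hyC
                have hxlen : 3 * CC k p + 2 ≤ x.length := by
                  rw [List.length_append] at hlen
                  unfold MM at hlen; omega
                by_cases hjK : j ≤ KK k p
                · exact Or.inr ⟨[], x, y, j, e, by simp, by simp, hyC, hjK, hx.isInfix⟩
                · push_neg at hjK
                  by_cases hxj : len j ≤ x.length
                  · left
                    exact ((crit_KK hjK).trans (suffix_pw_ge hx hxj (wrd_ne_nil j)).isInfix).trans
                      (List.prefix_append x y).isInfix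
                  · push_neg at hxj
                    left
                    have hxw : x <:+ wrd j := suffix_pw_small hx (le_of_lt hxj)
                    have : pw (wrd k) p <:+: x := suf_lemma j x hxw (by unfold CC at hxlen; omega)
                    exact this.trans (List.prefix_append x y).isInfix
          · -- u = x ++ y, x <:+ wrd (2*n), y <+: pw (wrd j) e ++ wrd (2*n)
            subst hxy
            by_cases hxC : CC k p < x.length
            · left
              exact (suf_lemma (2*n) x hx hxC).trans (List.prefix_append x y).isInfix
            · push_neg at hxC
              have hylen : 3 * CC k p + 2 ≤ y.length := by
                rw [List.length_append] at hlen
                unfold MM at hlen; omega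
              rcases le_or_gt y.length (pw (wrd j) e).length with hle | hgt
              · have hyr : y <+: pw (wrd j) e := prefix_shorter hy hle
                by_cases hjK : j ≤ KK k p
                · exact Or.inr ⟨x, y, [], j, e, by simp, hxC, by simp, hjK, hyr.isInfix⟩
                · push_neg at hjK
                  by_cases hyj : len j ≤ y.length
                  · left
                    exact ((crit_KK hjK).trans (prefix_pw_ge hyr hyj (wrd_ne_nil j)).isInfix).trans
                      (List.suffix_append x y).isInfix
                  · push_neg at hyj
                    left
                    have hyw : y <+: wrd j := prefix_pw_small hyr (le_of_lt hyj)
                    have : pw (wrd k) p <:+: y := pre_lemma j y hyw (by unfold CC at hylen; omega)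
                    exact this.trans (List.suffix_append x y).isInfix
              · obtain ⟨z, hyz, hz⟩ := prefix_longer hy (le_of_lt hgt)
                by_cases hzC : CC k p < z.length
                · left
                  have h1 : pw (wrd k) p <:+: z := pre_lemma (2*n) z hz hzC
                  have h2 : z <:+: x ++ y := by
                    rw [hyz, ← List.append_assoc]
                    exact (List.suffix_append _ z).isInfix
                  exact h1.trans h2
                · push_neg at hzC
                  by_cases hjK : j ≤ KK k p
                  · refine Or.inr ⟨x, pw (wrd j) e, z, j, e, ?_, hxC, hzC, hjK, List.infix_rfl⟩
                    rw [hyz, List.append_assoc]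
                  · push_neg at hjK
                    left
                    have he : 1 ≤ e := by
                      rcases hje with he | rfl
                      · exact he
                      · exfalso; unfold KK at hjK; omega
                    have hwj : wrd j <:+: x ++ y := by
                      rw [hyz, ← List.append_assoc]
                      have h1 : wrd j <+: pw (wrd j) e := by
                        match e, he with
                        | e+1, _ => rw [pw_succ]; exact List.prefix_append _ _
                      exact ((h1.isInfix).trans (List.suffix_append x _).isInfix).trans
                        (List.prefix_append _ z).isInfix
                    exact (crit_KK hjK).trans hwj
        rcases covering hu with hS | hS | ⟨r, hrmem, hSr⟩
        · left
          exact (crit_KK h2ncrit).trans hS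
        · exact ih (2*n) (by omega) 1 u (by rwa [pw_one]) hlen
        · rcases mem_Rq hrmem with rfl | hr
          · exact SEG 0 0 (by omega) (Or.inr rfl) (by simpa [pw_zero] using hSr)
          · obtain ⟨j, e, rfl, hj, hje⟩ := mem_runs ha hr
            exact SEG j e hj hje hSr

end S11

namespace S11
open List

/-! ### bridges between ℤ-indexed points and lists -/

def window (x : ℤ → Bool) (a : ℤ) (L : ℕ) : List Bool :=
  (List.range L).map (fun r : ℕ => x (a + (r:ℤ)))

@[simp] lemma window_length (x : ℤ → Bool) (a : ℤ) (L : ℕ) :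
    (window x a L).length = L := by
  rw [window, List.length_map, List.length_range]

lemma window_getElem {x : ℤ → Bool} {a : ℤ} {L r : ℕ} (h : r < (window x a L).length) :
    (window x a L)[r] = x (a + (r:ℤ)) := by
  simp only [window, List.getElem_map, List.getElem_range]

lemma window_getD {x : ℤ → Bool} {a : ℤ} {L r : ℕ} (h : r < L) :
    (window x a L).getD r false = x (a + r) := by
  rw [List.getD_eq_getElem _ _ (by simpa using h), window_getElem]

lemma perPt_congr {v : List Bool} {i i' : ℤ}
    (h : i % (v.length : ℤ) = i' % (v.length : ℤ)) : perPt v i = perPt v i' := by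
  unfold perPt; rw [h]

lemma perPt_natCast (v : List Bool) (hv : 0 < v.length) (r : ℕ) :
    perPt v (r : ℤ) = v.getD (r % v.length) false := by
  unfold perPt
  rw [← Int.natCast_emod, Int.toNat_natCast]

lemma perPt_shift (v : List Bool) (i : ℤ) (m : ℤ) :
    perPt v (i + (v.length : ℤ) * m) = perPt v i := by
  apply perPt_congr
  simp [Int.add_mul_emod_self_left]

lemma pw_getD {v : List Bool} (hv : 0 < v.length) :
    ∀ {q r : ℕ}, r < q * v.length → (pw v q).getD r false = v.getD (r % v.length) false := by
  intro q
  induction q with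
  | zero => intro r h; omega
  | succ q ih =>
    intro r h
    rw [pw_succ]
    rcases Nat.lt_or_ge r v.length with hr | hr
    · rw [List.getD_append _ _ _ _ hr, Nat.mod_eq_of_lt hr]
    · have hh : (q+1) * v.length = q * v.length + v.length := by ring
      rw [List.getD_append_right _ _ _ _ hr, ih (by omega), Nat.mod_eq_sub_mod hr]

lemma occursIn_of_infix_window {w : List Bool} {x : ℤ → Bool} {a : ℤ} {L : ℕ}
    (h : w <:+: window x a L) : occursIn w x := by
  obtain ⟨s, t, heq⟩ := h
  refine ⟨a + s.length, ?_⟩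
  intro r hr
  have hlen : s.length + r < L := by
    have := congrArg List.length heq
    simp only [List.length_append, window_length] at this
    omega
  have h1 : (window x a L).getD (s.length + r) false = w.getD r false := by
    rw [← heq, List.append_assoc, List.getD_append_right _ _ _ _ (by omega)]
    have : s.length + r - s.length = r := by omega
    rw [this, List.getD_append _ _ _ _ hr]
  have h2 := window_getD (x := x) (a := a) hlen
  rw [h1] at h2
  rw [h2]
  congr 1
  push_cast
  ring

/-- Bridge A: if `x` agrees with a shift of `perPt v` on a window, the window
list is an infix of a power of `v`. -/
lemma window_infix_pw {v : List Bool} (hv : 0 < v.length) {x : ℤ → Bool} {a c : ℤ} {L : ℕ}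
    (h : ∀ i : ℤ, a ≤ i → i < a + L → x i = perPt v (i + c)) :
    window x a L <:+: pw v (L + 2) := by
  set q := L + 2 with hq
  set o := ((a + c) % (v.length : ℤ)).toNat with ho
  have hoemod : ((a + c) % (v.length : ℤ)) = (o : ℤ) := by
    rw [ho, Int.toNat_of_nonneg (Int.emod_nonneg _ (by omega))]
  have holt : o < v.length := by
    have := Int.emod_lt_of_pos (a + c) (b := (v.length : ℤ)) (by exact_mod_cast hv)
    omega
  have hoL : o + L ≤ q * v.length := by
    have : q * v.length = L * v.length + 2 * v.length := by ring
    nlinarith [hv, holt, Nat.le_mul_of_pos_right L hv]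
  have hwin : window x a L = ((pw v q).drop o).take L := by
    apply List.ext_getElem
    · simp [pw_len]; omega
    · intro r h1 h2
      have hrL : r < L := by simpa using h1
      have e1 : (window x a L)[r] = x (a + (r:ℤ)) := window_getElem h1
      have e2 : (((pw v q).drop o).take L)[r] = (pw v q).getD (o + r) false := by
        rw [List.getElem_take, List.getElem_drop]
        exact (List.getD_eq_getElem _ _ _).symm
      rw [e1, e2, pw_getD hv (by omega)]
      rw [h (a + r) (by omega) (by omega)]
      have hdiv := Int.mul_ediv_add_emod (a + c) (v.length : ℤ)
      rw [hoemod] at hdiv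
      have hsum : a + (r:ℤ) + c = ((o + r : ℕ) : ℤ) + (v.length : ℤ) * ((a + c) / (v.length : ℤ)) := by
        push_cast
        omega
      rw [hsum, perPt_shift, perPt_natCast v hv]
  rw [hwin]
  exact ((List.take_prefix _ _).isInfix).trans ((List.drop_suffix _ _).isInfix)

/-- Bridge B: a window decomposition with middle an infix of a power of `v`
gives agreement of `x` with a shift of `perPt v` on the core. -/
lemma window_decomp {x : ℤ → Bool} {a : ℤ} {L : ℕ} {s mid pr v : List Bool}
    (hv : 0 < v.length) (hw : window x a L = s ++ mid ++ pr) {q' : ℕ}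
    (hmid : mid <:+: pw v q') :
    ∃ c : ℕ, c < v.length ∧
      ∀ r : ℕ, r < mid.length → x (a + s.length + r) = perPt v ((r : ℤ) + c) := by
  obtain ⟨s2, t2, heq⟩ := hmid
  have hlen2 : s2.length + mid.length + t2.length = q' * v.length := by
    have := congrArg List.length heq
    simp only [List.length_append, pw_len] at this
    omega
  refine ⟨s2.length % v.length, Nat.mod_lt _ hv, ?_⟩
  intro r hr
  have hwL : L = s.length + mid.length + pr.length := by
    have := congrArg List.length hw
    simp only [List.length_append, window_length] at this
    omega
  have h1 : x (a + s.length + r) = mid.getD r false := by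
    have h2 : (window x a L).getD (s.length + r) false = mid.getD r false := by
      rw [hw, List.append_assoc, List.getD_append_right _ _ _ _ (by omega)]
      have : s.length + r - s.length = r := by omega
      rw [this, List.getD_append _ _ _ _ hr]
    have h3 := window_getD (x := x) (a := a) (L := L) (r := s.length + r) (by omega)
    rw [h2] at h3
    rw [h3]
    congr 1
    push_cast
    ring
  have h4 : mid.getD r false = v.getD ((s2.length + r) % v.length) false := by
    have h5 : (pw v q').getD (s2.length + r) false = mid.getD r false := by
      rw [← heq, List.append_assoc, List.getD_append_right _ _ _ _ (by omega)]
      have : s2.length + r - s2.length = r := by omega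
      rw [this, List.getD_append _ _ _ _ hr]
    rw [← h5, pw_getD hv (by omega)]
  rw [h1, h4]
  have h6 : perPt v ((r : ℤ) + (s2.length % v.length : ℕ)) =
      v.getD ((r + s2.length % v.length) % v.length) false := by
    rw [← Nat.cast_add, perPt_natCast v hv]
  rw [h6]
  congr 1
  conv_lhs => rw [Nat.add_comm, Nat.add_mod]
  conv_rhs => rw [Nat.add_mod, Nat.mod_mod_of_dvd _ dvd_rfl]

end S11

namespace S11
open List

lemma mem_XX_window {x : ℤ → Bool} (hx : x ∈ XX) (a : ℤ) (L : ℕ) :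
    ∃ (N : ℕ) (c : ℤ), ∀ i : ℤ, a ≤ i → i < a + L → x i = perPt (wrd N) (i + c) := by
  have hopen : IsOpen {y : ℤ → Bool | ∀ i ∈ Finset.Icc a (a + (L:ℤ)), y i = x i} := by
    have heq : {y : ℤ → Bool | ∀ i ∈ Finset.Icc a (a + (L:ℤ)), y i = x i} =
        ⋂ i ∈ Finset.Icc a (a + (L:ℤ)), (fun y : ℤ → Bool => y i) ⁻¹' {x i} := by
      ext y; simp
    rw [heq]
    exact isOpen_biInter_finset
      (fun i _ => (continuous_apply i).isOpen_preimage _ (isOpen_discrete _))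
  obtain ⟨z, hz1, hz2⟩ := mem_closure_iff.1 hx _ hopen (fun i _ => rfl)
  obtain ⟨N, c, rfl⟩ := hz2
  exact ⟨N, c, fun i h1 h2 =>
    (hz1 i (Finset.mem_Icc.2 ⟨h1, by omega⟩)).symm⟩

lemma closed_mem_of_eventually {Y : Set (ℤ → Bool)} (hcl : IsClosed Y) (f : ℕ → ℤ → Bool)
    (hf : ∀ t, f t ∈ Y) (x : ℤ → Bool) (h : ∀ i : ℤ, ∃ T, ∀ t, T ≤ t → f t i = x i) :
    x ∈ Y := by
  refine hcl.mem_of_tendsto (b := Filter.atTop) ?_ (Filter.Eventually.of_forall hf)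
  rw [tendsto_pi_nhds]
  intro i
  rw [nhds_discrete, Filter.tendsto_pure]
  obtain ⟨T, hT⟩ := h i
  exact Filter.eventually_atTop.2 ⟨T, hT⟩

lemma pigeon {f : ℕ → ℕ × ℕ} {S : Finset (ℕ × ℕ)} (h : ∀ t, f t ∈ S) :
    ∃ d, ∀ T : ℕ, ∃ t, T ≤ t ∧ f t = d := by
  obtain ⟨y, hy⟩ := Finite.exists_infinite_fiber (fun t => (⟨f t, h t⟩ : {d // d ∈ S}))
  refine ⟨y.1, fun T => ?_⟩
  have hinf : ((fun t => (⟨f t, h t⟩ : {d // d ∈ S})) ⁻¹' {y}).Infinite :=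
    Set.infinite_coe_iff.1 hy
  obtain ⟨t, ht, hTt⟩ := hinf.exists_gt T
  exact ⟨t, le_of_lt hTt, congrArg Subtype.val ht⟩

lemma point_dichotomy {x : ℤ → Bool} (hx : x ∈ XX) {k p : ℕ}
    (hnot : ¬ occursIn (pw (wrd k) p) x) :
    ∃ j D : ℕ, j ≤ KK k p ∧ D < len j ∧ x = shiftZ (D : ℤ) (perPt (wrd j)) := by
  have main : ∀ t : ℕ, ∃ j D : ℕ, j ≤ KK k p ∧ D < len j ∧
      ∀ i : ℤ, -(t:ℤ) + CC k p ≤ i → i < -(t:ℤ) + (MM k p + 2*t) - CC k p →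
        x i = perPt (wrd j) (i + D) := by
    intro t
    set a : ℤ := -(t:ℤ) with ha
    set L : ℕ := MM k p + 2*t with hL
    obtain ⟨N, c, hagree⟩ := mem_XX_window hx a L
    have hwin : window x a L <:+: pw (wrd N) (L+2) := window_infix_pw (len_pos N) hagree
    rcases lemA k p N (L+2) (window x a L) hwin (by rw [window_length]; omega) with hcont | hdec
    · exact absurd (occursIn_of_infix_window hcont) hnot
    · obtain ⟨s, mid, pr, j, q', hweq, hsC, hprC, hjK, hmid⟩ := hdec
      obtain ⟨c2, hc2, hagr⟩ := window_decomp (len_pos j) hweq hmid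
      set C : ℤ := (c2 : ℤ) - a - s.length with hC
      set D : ℕ := (C % (len j : ℤ)).toNat with hD
      have hlenj : (0:ℤ) < (len j : ℤ) := by exact_mod_cast len_pos j
      have hne : (len j : ℤ) ≠ 0 := ne_of_gt hlenj
      have hDC : (D:ℤ) = C % (len j : ℤ) :=
        Int.toNat_of_nonneg (Int.emod_nonneg C hne)
      refine ⟨j, D, hjK, ?_, ?_⟩
      · have hh : (D:ℤ) < (len j : ℤ) := by
          rw [hDC]; exact Int.emod_lt_of_pos C hlenj
        exact_mod_cast hh
      · intro i h1 h2
        have hmlen : s.length + mid.length + pr.length = L := by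
          have := congrArg List.length hweq
          simp only [List.length_append, window_length] at this
          omega
        have hi1 : a + s.length ≤ i := by omega
        have hi2 : i < a + s.length + mid.length := by omega
        set r : ℕ := (i - (a + s.length)).toNat with hr
        have hri : (r : ℤ) = i - (a + s.length) := Int.toNat_of_nonneg (by omega)
        have hrm : r < mid.length := by omega
        have hxr := hagr r hrm
        have hxi : a + s.length + (r:ℤ) = i := by omega
        rw [hxi] at hxr
        rw [hxr]
        have he1 : (r:ℤ) + c2 = i + C := by omega
        rw [he1]
        have hdiv := Int.mul_ediv_add_emod C (len j : ℤ)
        have he2 : i + C = (i + D) + (len j : ℤ) * (C / (len j : ℤ)) := by omega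
        rw [he2]
        exact perPt_shift (wrd j) (i + (D:ℤ)) (C / (len j : ℤ))
  choose jf Df h1 h2 h3 using main
  have hfS : ∀ t, (jf t, Df t) ∈
      (Finset.range (KK k p + 1)) ×ˢ (Finset.range (len (KK k p) + 1)) := by
    intro t
    rw [Finset.mem_product, Finset.mem_range, Finset.mem_range]
    have ha := len_mono (h1 t)
    have hb := h2 t
    have hc := h1 t
    constructor <;> omega
  obtain ⟨⟨j, D⟩, hjD⟩ := pigeon hfS
  obtain ⟨t0, _, ht0⟩ := hjD 0
  have hj0 : jf t0 = j := by rw [Prod.ext_iff] at ht0; exact ht0.1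
  have hD0 : Df t0 = D := by rw [Prod.ext_iff] at ht0; exact ht0.2
  refine ⟨j, D, by rw [← hj0]; exact h1 t0, by rw [← hj0, ← hD0]; exact h2 t0, ?_⟩
  funext i
  obtain ⟨t, hTt, htd⟩ := hjD (CC k p + i.natAbs + 1)
  have hjt : jf t = j := by rw [Prod.ext_iff] at htd; exact htd.1
  have hDt : Df t = D := by rw [Prod.ext_iff] at htd; exact htd.2
  have hb1 : -(t:ℤ) + CC k p ≤ i := by omega
  have hb2 : i < -(t:ℤ) + (MM k p + 2*t) - CC k p := by
    have hM : MM k p = 4 * CC k p + 2 := rfl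
    omega
  have := h3 t i hb1 hb2
  rw [hjt, hDt] at this
  exact this

end S11

/-- `X` has no proper infinite subsystem: every infinite closed shift-invariant
subset `Y ⊆ X` equals `X`. -/
theorem stmt11 (Y : Set (ℤ → Bool)) (hYX : Y ⊆ XX) (hcl : IsClosed Y)
    (hinv : ∀ n : ℤ, shiftZ n '' Y ⊆ Y) (hinf : Y.Infinite) :
    Y = XX := by
  classical
  have key : ∀ n q : ℕ, ∃ y ∈ Y, occursIn (S11.pw (wrd n) q) y := by
    by_contra hcon
    push_neg at hcon
    obtain ⟨k, p, hkp⟩ := hcon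
    have hsub : Y ⊆ ⋃ j ∈ Set.Iic (S11.KK k p), ⋃ D ∈ Set.Iio (S11.len j),
        {shiftZ (D:ℤ) (perPt (wrd j))} := by
      intro y hy
      obtain ⟨j, D, hj, hD, heq⟩ := S11.point_dichotomy (hYX hy) (hkp y hy)
      exact Set.mem_biUnion (Set.mem_Iic.2 hj) (Set.mem_biUnion (Set.mem_Iio.2 hD) heq)
    have hfin : (⋃ j ∈ Set.Iic (S11.KK k p), ⋃ D ∈ Set.Iio (S11.len j),
        ({shiftZ (D:ℤ) (perPt (wrd j))} : Set (ℤ → Bool))).Finite := by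
      apply Set.Finite.biUnion (Set.finite_Iic (S11.KK k p))
      intro j _
      apply Set.Finite.biUnion (Set.finite_Iio (S11.len j))
      intro D _
      exact Set.finite_singleton _
    exact hinf (hfin.subset hsub)
  have hper : ∀ n : ℕ, perPt (wrd n) ∈ Y := by
    intro n
    have hseq : ∀ t : ℕ, ∃ y, y ∈ Y ∧ ∀ m : ℤ,
        -((S11.len n : ℤ) * ((t:ℤ)+1)) ≤ m → m < (S11.len n : ℤ) * ((t:ℤ)+1) →
        y m = perPt (wrd n) m := by
      intro t
      obtain ⟨y, hyY, i, hocc⟩ := key n (2*t+2)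
      refine ⟨shiftZ (i + (S11.len n : ℤ)*((t:ℤ)+1)) y, hinv _ ⟨y, hyY, rfl⟩, ?_⟩
      intro m hm1 hm2
      have h2P : (((2*t+2) * S11.len n : ℕ) : ℤ) = 2 * ((S11.len n : ℤ)*((t:ℤ)+1)) := by
        push_cast; ring
      set r : ℕ := (m + (S11.len n:ℤ)*((t:ℤ)+1)).toNat with hrdef
      have hreq : (r:ℤ) = m + (S11.len n:ℤ)*((t:ℤ)+1) := Int.toNat_of_nonneg (by omega)
      have hrlt : r < (2*t+2) * S11.len n := by omega
      have hy1 := hocc r (by rw [S11.pw_len]; exact hrlt)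
      rw [S11.pw_getD (S11.len_pos n) hrlt] at hy1
      show y (m + (i + (S11.len n:ℤ)*((t:ℤ)+1))) = perPt (wrd n) m
      have hmi : m + (i + (S11.len n:ℤ)*((t:ℤ)+1)) = i + r := by omega
      rw [hmi, hy1, ← S11.perPt_natCast _ (S11.len_pos n), hreq]
      exact S11.perPt_shift (wrd n) m ((t:ℤ)+1)
    choose yf hyf hagr using hseq
    apply S11.closed_mem_of_eventually hcl yf hyf
    intro i
    refine ⟨i.natAbs + 1, fun t ht => ?_⟩
    have h1 : (1:ℤ) ≤ (S11.len n : ℤ) := by exact_mod_cast S11.len_pos n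
    have hP : ((i.natAbs : ℤ) + 1) ≤ (S11.len n : ℤ) * ((t:ℤ)+1) := by
      have h2 : ((i.natAbs:ℤ)+1) ≤ ((t:ℤ)+1) := by omega
      have h3 : ((t:ℤ)+1) ≤ (S11.len n : ℤ) * ((t:ℤ)+1) :=
        le_mul_of_one_le_left (by omega) h1
      omega
    exact hagr t i (by omega) (by omega)
  have hXgen : Xgen ⊆ Y := by
    rintro z ⟨n, c, rfl⟩
    exact hinv c ⟨perPt (wrd n), hper n, rfl⟩
  exact Set.Subset.antisymm hYX (closure_minimal hXgen hcl)
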